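/- Let X be an m×m complex matrix such that for every λ ∈ ℂ with |λ| = 1 the matrix I_m + λ·X + conj(λ)·Xᴴ is positive semidefinite. Then for every n ∈ ℕ and every n×n complex matrix B with operator norm ‖B‖ ≤ 1, the matrix I_n ⊗ I_m + B ⊗ X + Bᴴ ⊗ Xᴴ is positive semidefinite. -/

import Mathlib

open Matrix Kronecker
open scoped ComplexOrder

/-- The operator norm (spectral norm) of a square complex matrix, i.e. the norm of the
induced continuous linear endomorphism of Euclidean space. -/
noncomputable def opNorm {k : ℕ} (A : Matrix (Fin k) (Fin k) ℂ) : ℝ :=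
  ‖Matrix.toEuclideanCLM (𝕜 := ℂ) A‖


open Finset
open scoped InnerProductSpace

noncomputable def arvOmega (K : ℕ) : ℂ := Complex.exp ((2 * Real.pi / (K+1) : ℝ) * Complex.I)

lemma geom_sum_root (c : ℂ) (M : ℕ) (hc : c ^ M = 1) :
    ∑ t ∈ Finset.range M, c ^ t = if c = 1 then (M : ℂ) else 0 := by
  split_ifs with h
  · simp [h]
  · rw [geom_sum_eq h, hc]; simp

lemma omega_pow_K (K : ℕ) :
    (arvOmega K) ^ (K+1) = 1 := by
  unfold arvOmega
  rw [← Complex.exp_nat_mul]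
  have h : ((K:ℂ)+1) ≠ 0 := Nat.cast_add_one_ne_zero K
  have : ((K+1 : ℕ) : ℂ) * (((2 * Real.pi / (K+1) : ℝ)) * Complex.I)
      = 2 * Real.pi * Complex.I := by
    push_cast
    field_simp
  rw [this, Complex.exp_two_pi_mul_I]

lemma omega_norm (K : ℕ) :
    ‖arvOmega K‖ = 1 :=
  Complex.norm_exp_ofReal_mul_I _

lemma omega_pow_ne_one (K : ℕ) {e : ℕ} (he : 0 < e) (heK : e ≤ K) :
    (arvOmega K) ^ e ≠ 1 := by
  unfold arvOmega
  set r : ℝ := 2 * Real.pi / (K+1) with hr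
  rw [← Complex.exp_nat_mul]
  intro h
  rw [Complex.exp_eq_one_iff] at h
  obtain ⟨n, hn⟩ := h
  have hπ := Real.pi_pos
  have h1 : (e:ℝ) * r = n * (2 * Real.pi) := by
    simpa using congrArg Complex.im hn
  have hK1 : (0:ℝ) < (K:ℝ) + 1 := by positivity
  have hrpos : (0:ℝ) < r := by rw [hr]; positivity
  have he' : (0:ℝ) < e := by exact_mod_cast he
  have heK' : (e:ℝ) < (K:ℝ) + 1 := by exact_mod_cast Nat.lt_succ_of_le heK
  have hn0 : (0:ℝ) < n := by nlinarith
  have hn1 : (1:ℝ) ≤ n := by exact_mod_cast (by exact_mod_cast hn0 : (0:ℤ) < n)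
  have : (e:ℝ) * r < 1 * (2 * Real.pi) := by
    rw [one_mul]
    calc (e:ℝ) * r < ((K:ℝ)+1) * r := by
          apply mul_lt_mul_of_pos_right heK' hrpos
      _ = 2 * Real.pi := by rw [hr]; field_simp
  nlinarith



lemma conj_omega_mul (K : ℕ) : (starRingEnd ℂ) (arvOmega K) * arvOmega K = 1 := by
  rw [mul_comm, Complex.mul_conj]
  rw [Complex.normSq_eq_norm_sq, omega_norm]
  norm_num

lemma orth_ne (K : ℕ) {p q : ℕ} (hlt : p < q) (hq : q ≤ K) :
    ((starRingEnd ℂ) (arvOmega K))^p * (arvOmega K)^q ≠ 1 := by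
  rw [show q = p + (q-p) by omega, pow_add, ← mul_assoc, ← mul_pow, conj_omega_mul, one_pow,
    one_mul]
  exact omega_pow_ne_one K (by omega) (by omega)

lemma orth (K p q : ℕ) (hp : p ≤ K) (hq : q ≤ K) :
    ∑ t ∈ Finset.range (K+1), (((starRingEnd ℂ) (arvOmega K))^p * (arvOmega K)^q)^t
      = if p = q then ((K:ℂ)+1) else 0 := by
  set ω := arvOmega K with hω
  have hcM : (((starRingEnd ℂ) ω)^p * ω^q)^(K+1) = 1 := by
    rw [mul_pow, ← pow_mul, ← pow_mul, mul_comm p (K+1), mul_comm q (K+1), pow_mul, pow_mul,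
      ← map_pow, omega_pow_K]
    simp
  have hiff : (((starRingEnd ℂ) ω)^p * ω^q = 1) ↔ p = q := by
    constructor
    · intro h
      by_contra hpq
      rcases Nat.lt_or_ge p q with hlt | hge
      · exact orth_ne K hlt hq h
      · have hqp : q < p := by omega
        have h2 := congrArg (starRingEnd ℂ) h
        simp only [_root_.map_mul, _root_.map_one, _root_.map_pow, Complex.conj_conj] at h2
        rw [mul_comm] at h2
        exact orth_ne K hqp hp h2
    · intro h
      subst h
      rw [← mul_pow, conj_omega_mul, one_pow]
  rw [geom_sum_root _ _ hcM, if_congr hiff rfl rfl]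
  split_ifs <;> push_cast <;> ring



lemma arv_sum_identity {ι : Type*} [Fintype ι] [DecidableEq ι]
    (W Y : Matrix ι ι ℂ) (hW : Wᴴ * W = 1)
    (hC : W * Y = Y * W) (hC' : W * Yᴴ = Yᴴ * W) (K : ℕ) :
    ∑ t ∈ Finset.range (K+1),
      ((∑ k ∈ Finset.range K, ((arvOmega K)^t)^k • W^k)ᴴ *
        ((1 : Matrix ι ι ℂ) + (arvOmega K)^t • Y
          + (starRingEnd ℂ) ((arvOmega K)^t) • Yᴴ) *
        (∑ k ∈ Finset.range K, ((arvOmega K)^t)^k • W^k))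
    = ((K*(K+1) : ℕ) : ℂ) • (1 : Matrix ι ι ℂ)
      + (((K-1)*(K+1) : ℕ) : ℂ) • (Wᴴ * Y + Yᴴ * W) := by
  set ω := arvOmega K with hω
  have hpow : ∀ k : ℕ, (Wᴴ)^k * W^k = 1 := by
    intro k
    induction k with
    | zero => simp
    | succ k ih =>
      rw [pow_succ (Wᴴ) k, pow_succ' W k, mul_assoc ((Wᴴ)^k) (Wᴴ) _,
        ← mul_assoc (Wᴴ) W (W^k), hW, one_mul, ih]
  have hcomY : ∀ k : ℕ, Y * W^k = W^k * Y := fun k => (Commute.pow_left (hC) k).symm.eq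
  have hcomY' : ∀ k : ℕ, Yᴴ * W^k = W^k * Yᴴ := fun k => (Commute.pow_left (hC') k).symm.eq
  have hA : ∀ k : ℕ, (Wᴴ)^(k+1) * Y * W^k = Wᴴ * Y := by
    intro k
    rw [mul_assoc, hcomY k, pow_succ' (Wᴴ) k, mul_assoc (Wᴴ) ((Wᴴ)^k) _,
      ← mul_assoc ((Wᴴ)^k) (W^k) Y, hpow, one_mul]
  have hB : ∀ j : ℕ, (Wᴴ)^j * Yᴴ * W^(j+1) = Yᴴ * W := by
    intro j
    rw [pow_succ W j, mul_assoc ((Wᴴ)^j) Yᴴ _, ← mul_assoc Yᴴ (W^j) W, hcomY' j,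
      mul_assoc (W^j) Yᴴ W, ← mul_assoc ((Wᴴ)^j) (W^j) _, hpow, one_mul]
  have key : ∀ t : ℕ,
      (∑ k ∈ Finset.range K, ((ω:ℂ)^t)^k • W^k)ᴴ *
        ((1 : Matrix ι ι ℂ) + ω^t • Y + (starRingEnd ℂ) (ω^t) • Yᴴ) *
        (∑ k ∈ Finset.range K, ((ω:ℂ)^t)^k • W^k)
      = ∑ j ∈ Finset.range K, ∑ k ∈ Finset.range K,
          (((((starRingEnd ℂ) ω)^k * ω^j)^t) • ((Wᴴ)^k * W^j)
          + ((((starRingEnd ℂ) ω)^k * ω^(j+1))^t) • ((Wᴴ)^k * Y * W^j)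
          + ((((starRingEnd ℂ) ω)^(k+1) * ω^j)^t) • ((Wᴴ)^k * Yᴴ * W^j)) := by
    intro t
    rw [conjTranspose_sum]
    simp only [conjTranspose_smul, conjTranspose_pow]
    simp only [Finset.sum_mul, Finset.mul_sum]
    refine Finset.sum_congr rfl fun j hj => Finset.sum_congr rfl fun k hk => ?_
    simp only [mul_add, add_mul, mul_one, one_mul, mul_smul_comm, smul_mul_assoc, smul_smul,
      smul_add, map_pow, star_pow, Complex.star_def]
    match_scalars <;> ring
  rw [Finset.sum_congr rfl fun t _ => key t]
  rw [Finset.sum_comm]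
  rw [Finset.sum_congr rfl fun j (_ : j ∈ Finset.range K) => Finset.sum_comm]
  have step3 : ∀ j ∈ Finset.range K, ∀ k ∈ Finset.range K,
      (∑ t ∈ Finset.range (K+1),
          (((((starRingEnd ℂ) ω)^k * ω^j)^t) • ((Wᴴ)^k * W^j)
          + ((((starRingEnd ℂ) ω)^k * ω^(j+1))^t) • ((Wᴴ)^k * Y * W^j)
          + ((((starRingEnd ℂ) ω)^(k+1) * ω^j)^t) • ((Wᴴ)^k * Yᴴ * W^j)))
      = (if k = j then ((K:ℂ)+1) else 0) • ((Wᴴ)^k * W^j)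
        + (if k = j+1 then ((K:ℂ)+1) else 0) • ((Wᴴ)^k * Y * W^j)
        + (if k+1 = j then ((K:ℂ)+1) else 0) • ((Wᴴ)^k * Yᴴ * W^j) := by
    intro j hj k hk
    rw [Finset.mem_range] at hj hk
    rw [Finset.sum_add_distrib, Finset.sum_add_distrib, ← Finset.sum_smul, ← Finset.sum_smul,
      ← Finset.sum_smul, orth K k j (by omega) (by omega), orth K k (j+1) (by omega) (by omega),
      orth K (k+1) j (by omega) (by omega)]
  rw [Finset.sum_congr rfl fun j hj => Finset.sum_congr rfl fun k hk => step3 j hj k hk]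
  simp only [Finset.sum_add_distrib]
  have T1 : ∑ j ∈ Finset.range K, ∑ k ∈ Finset.range K,
      (if k = j then ((K:ℂ)+1) else 0) • ((Wᴴ)^k * W^j)
      = K • (((K:ℂ)+1) • (1 : Matrix ι ι ℂ)) := by
    have h1 : ∀ j ∈ Finset.range K, ∑ k ∈ Finset.range K,
        (if k = j then ((K:ℂ)+1) else 0) • ((Wᴴ)^k * W^j)
        = ((K:ℂ)+1) • (1 : Matrix ι ι ℂ) := by
      intro j hj
      simp only [ite_smul, zero_smul, Finset.sum_ite_eq', hj, if_true]
      rw [hpow]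
    rw [Finset.sum_congr rfl h1, Finset.sum_const, Finset.card_range]
  have hsubset : Finset.range (K-1) ⊆ Finset.range K := Finset.range_subset_range.mpr (by omega)
  have hcount : ∀ M : Matrix ι ι ℂ,
      (∑ j ∈ Finset.range K, if j+1 < K then M else 0) = (K-1) • M := by
    intro M
    rw [← Finset.sum_subset hsubset (fun x hx hx' => by
      rw [Finset.mem_range] at hx
      simp only [Finset.mem_range] at hx'
      rw [if_neg (by omega)])]
    have h0 : ∀ x ∈ Finset.range (K-1), (if x+1 < K then M else 0) = M := by
      intro x hx
      rw [Finset.mem_range] at hx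
      rw [if_pos (by omega)]
    rw [Finset.sum_congr rfl h0, Finset.sum_const, Finset.card_range]
  have T2 : ∑ j ∈ Finset.range K, ∑ k ∈ Finset.range K,
      (if k = j+1 then ((K:ℂ)+1) else 0) • ((Wᴴ)^k * Y * W^j)
      = (K-1) • (((K:ℂ)+1) • (Wᴴ * Y)) := by
    have h2 : ∀ j ∈ Finset.range K, ∑ k ∈ Finset.range K,
        (if k = j+1 then ((K:ℂ)+1) else 0) • ((Wᴴ)^k * Y * W^j)
        = if j+1 < K then ((K:ℂ)+1) • (Wᴴ * Y) else 0 := by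
      intro j hj
      simp only [ite_smul, zero_smul, Finset.sum_ite_eq', Finset.mem_range]
      split_ifs with h
      · rw [hA]
      · rfl
    rw [Finset.sum_congr rfl h2, hcount]
  have T3 : ∑ j ∈ Finset.range K, ∑ k ∈ Finset.range K,
      (if k+1 = j then ((K:ℂ)+1) else 0) • ((Wᴴ)^k * Yᴴ * W^j)
      = (K-1) • (((K:ℂ)+1) • (Yᴴ * W)) := by
    rw [Finset.sum_comm]
    have h3 : ∀ k ∈ Finset.range K, ∑ j ∈ Finset.range K,
        (if k+1 = j then ((K:ℂ)+1) else 0) • ((Wᴴ)^k * Yᴴ * W^j)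
        = if k+1 < K then ((K:ℂ)+1) • (Yᴴ * W) else 0 := by
      intro k hk
      simp only [ite_smul, zero_smul, Finset.sum_ite_eq, Finset.mem_range]
      split_ifs with h
      · rw [hB]
      · rfl
    rw [Finset.sum_congr rfl h3, hcount]
  rw [T1, T2, T3]
  rw [← Nat.cast_smul_eq_nsmul ℂ, ← Nat.cast_smul_eq_nsmul ℂ, ← Nat.cast_smul_eq_nsmul ℂ]
  push_cast
  match_scalars <;> ring



lemma posSemidef_add {ι : Type*} [Fintype ι] {A B : Matrix ι ι ℂ}
    (hA : A.PosSemidef) (hB : B.PosSemidef) : (A + B).PosSemidef :=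
  Matrix.posSemidef_iff_dotProduct_mulVec.mpr ⟨hA.1.add hB.1, fun x => by
    rw [Matrix.add_mulVec, dotProduct_add]
    exact add_nonneg (hA.dotProduct_mulVec_nonneg x) (hB.dotProduct_mulVec_nonneg x)⟩

lemma posSemidef_sum {ι α : Type*} [Fintype ι] (s : Finset α) (f : α → Matrix ι ι ℂ)
    (h : ∀ a ∈ s, (f a).PosSemidef) : (∑ a ∈ s, f a).PosSemidef :=
  Finset.sum_induction f Matrix.PosSemidef (fun _ _ ha hb => posSemidef_add ha hb)
    ⟨Matrix.isHermitian_zero, fun x => by simp⟩ h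

lemma unitary_psd {ι : Type*} [Fintype ι] [DecidableEq ι]
    (W Y : Matrix ι ι ℂ) (hW : Wᴴ * W = 1)
    (hC : W * Y = Y * W) (hC' : W * Yᴴ = Yᴴ * W)
    (hY : ∀ lam : ℂ, ‖lam‖ = 1 →
      ((1 : Matrix ι ι ℂ) + lam • Y + (starRingEnd ℂ) lam • Yᴴ).PosSemidef) :
    ((1 : Matrix ι ι ℂ) + Wᴴ * Y + Yᴴ * W).PosSemidef := by
  have hHerm : (Wᴴ * Y + Yᴴ * W).IsHermitian := by
    unfold Matrix.IsHermitian
    rw [Matrix.conjTranspose_add, Matrix.conjTranspose_mul, Matrix.conjTranspose_mul,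
      Matrix.conjTranspose_conjTranspose, Matrix.conjTranspose_conjTranspose, add_comm]
  have hQ : ∀ K : ℕ, (((K*(K+1) : ℕ) : ℂ) • (1 : Matrix ι ι ℂ)
      + (((K-1)*(K+1) : ℕ) : ℂ) • (Wᴴ * Y + Yᴴ * W)).PosSemidef := by
    intro K
    rw [← arv_sum_identity W Y hW hC hC' K]
    refine posSemidef_sum _ _ fun t _ => ?_
    have hnorm : ‖(arvOmega K)^t‖ = 1 := by rw [norm_pow, omega_norm, one_pow]
    exact (hY _ hnorm).conjTranspose_mul_mul_same _
  refine Matrix.posSemidef_iff_dotProduct_mulVec.mpr ⟨?_, ?_⟩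
  · show _ = _
    rw [Matrix.conjTranspose_add, Matrix.conjTranspose_add, Matrix.conjTranspose_one,
      Matrix.conjTranspose_mul, Matrix.conjTranspose_mul, Matrix.conjTranspose_conjTranspose,
      Matrix.conjTranspose_conjTranspose]
    abel
  intro x
  set a : ℂ := dotProduct (star x) x with ha_def
  set b : ℂ := dotProduct (star x) ((Wᴴ * Y + Yᴴ * W) *ᵥ x) with hb_def
  have hgoal : dotProduct (star x) (((1 : Matrix ι ι ℂ) + Wᴴ * Y + Yᴴ * W) *ᵥ x) = a + b := by
    rw [add_assoc, Matrix.add_mulVec, dotProduct_add, Matrix.one_mulVec]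
  rw [hgoal]
  have ha : (0:ℂ) ≤ a := by
    rw [ha_def, dotProduct]
    exact Finset.sum_nonneg fun i _ => star_mul_self_nonneg (x i)
  have hbstar : b = star b := by
    calc b = star (star ((Wᴴ*Y + Yᴴ*W) *ᵥ x) ⬝ᵥ x) := star_dotProduct _ _
      _ = star ((star x ᵥ* (Wᴴ*Y+Yᴴ*W)ᴴ) ⬝ᵥ x) := by rw [Matrix.star_mulVec]
      _ = star (star x ⬝ᵥ ((Wᴴ*Y+Yᴴ*W) *ᵥ x)) := by rw [hHerm.eq, ← Matrix.dotProduct_mulVec]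
      _ = star b := rfl
  have hbim : b.im = 0 := Complex.conj_eq_iff_im.mp hbstar.symm
  have haim : a.im = 0 := ((Complex.le_def.mp ha).2).symm
  have hscal : ∀ K : ℕ, (0:ℂ) ≤ ((K*(K+1) : ℕ) : ℂ) * a + (((K-1)*(K+1) : ℕ) : ℂ) * b := by
    intro K
    have h := (hQ K).dotProduct_mulVec_nonneg x
    rwa [Matrix.add_mulVec, dotProduct_add, Matrix.smul_mulVec, Matrix.smul_mulVec,
      dotProduct_smul, dotProduct_smul, Matrix.one_mulVec, smul_eq_mul, smul_eq_mul,
      ← ha_def, ← hb_def] at h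
  have hre : ∀ K : ℕ, (0:ℝ) ≤ ((K*(K+1) : ℕ) : ℝ) * a.re + (((K-1)*(K+1) : ℕ) : ℝ) * b.re := by
    intro K
    have h := (Complex.le_def.mp (hscal K)).1
    simpa [Complex.add_re, Complex.mul_re, haim, hbim] using h
  rw [Complex.le_def]
  refine ⟨?_, by simp [Complex.add_im, haim, hbim]⟩
  simp only [Complex.add_re, Complex.zero_re]
  by_contra hcon
  push_neg at hcon
  have hA : (0:ℝ) ≤ a.re := (Complex.le_def.mp ha).1
  have hε : (0:ℝ) < -(a.re + b.re) := by linarith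
  obtain ⟨n, hn⟩ := exists_nat_gt (a.re / (-(a.re + b.re)))
  have hn' : a.re < (n:ℝ) * (-(a.re + b.re)) := (div_lt_iff₀ hε).mp hn
  have h1 := hre (n+2)
  have hsub : (n+2-1 : ℕ) = n+1 := rfl
  rw [hsub] at h1
  push_cast at h1
  nlinarith [h1, hn', hε, hA, mul_pos (show (0:ℝ) < (n:ℝ)+3 by positivity) hε]



lemma kron_conjTranspose {l m p q : Type*} (A : Matrix l m ℂ) (B : Matrix p q ℂ) :
    (A ⊗ₖ B)ᴴ = Aᴴ ⊗ₖ Bᴴ := by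
  ext ⟨i,j⟩ ⟨k,l'⟩
  simp [Matrix.conjTranspose_apply, Matrix.kroneckerMap_apply, star_mul', mul_comm]

open scoped MatrixOrder in
lemma one_kron_psd {κ ι : Type*} [Fintype κ] [DecidableEq κ] [Fintype ι] [DecidableEq ι]
    {P : Matrix ι ι ℂ} (hP : P.PosSemidef) :
    ((1 : Matrix κ κ ℂ) ⊗ₖ P).PosSemidef := by
  have h1 : (1 : Matrix κ κ ℂ) ⊗ₖ P = ((1 : Matrix κ κ ℂ) ⊗ₖ CFC.sqrt P)ᴴ
      * ((1 : Matrix κ κ ℂ) ⊗ₖ CFC.sqrt P) := by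
    rw [kron_conjTranspose, Matrix.conjTranspose_one, (CFC.sqrt_nonneg P).posSemidef.1.eq,
      ← Matrix.mul_kronecker_mul, one_mul, CFC.sqrt_mul_sqrt_self P hP.nonneg]
  rw [h1]
  exact Matrix.posSemidef_conjTranspose_mul_self _

lemma contraction_one_sub_psd {n : ℕ} (B : Matrix (Fin n) (Fin n) ℂ) (hB : opNorm B ≤ 1) :
    ((1 : Matrix (Fin n) (Fin n) ℂ) - Bᴴ * B).PosSemidef := by
  refine Matrix.posSemidef_iff_dotProduct_mulVec.mpr ⟨?_, ?_⟩
  · show _ = _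
    rw [Matrix.conjTranspose_sub, Matrix.conjTranspose_one, Matrix.conjTranspose_mul,
      Matrix.conjTranspose_conjTranspose]
  intro x
  rw [Matrix.sub_mulVec, dotProduct_sub, Matrix.one_mulVec, ← Matrix.mulVec_mulVec,
    Matrix.dotProduct_mulVec, ← Matrix.star_mulVec]
  have hdot : ∀ y : Fin n → ℂ, star y ⬝ᵥ y = ((∑ i, ‖y i‖^2 : ℝ) : ℂ) := by
    intro y
    rw [dotProduct]
    push_cast
    refine Finset.sum_congr rfl fun i _ => ?_
    rw [Pi.star_apply, Complex.star_def, mul_comm, Complex.mul_conj, Complex.normSq_eq_norm_sq]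
    norm_num
  rw [hdot, hdot, ← Complex.ofReal_sub, ← Complex.ofReal_zero, Complex.real_le_real,
    sub_nonneg]
  -- now a statement about real sums of squared norms
  have hy : ∀ y : Fin n → ℂ, ∑ i, ‖y i‖^2 = ‖(WithLp.equiv 2 (Fin n → ℂ)).symm y‖^2 := by
    intro y
    rw [EuclideanSpace.norm_eq, Real.sq_sqrt (by positivity)]
    rfl
  rw [hy, hy]
  have hBx : (WithLp.equiv 2 (Fin n → ℂ)).symm (B *ᵥ x)
      = Matrix.toEuclideanCLM (𝕜 := ℂ) B ((WithLp.equiv 2 (Fin n → ℂ)).symm x) := by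
    exact (Matrix.toEuclideanCLM_toLp B x).symm
  rw [hBx]
  have hle : ‖Matrix.toEuclideanCLM (𝕜 := ℂ) B ((WithLp.equiv 2 (Fin n → ℂ)).symm x)‖
      ≤ ‖(WithLp.equiv 2 (Fin n → ℂ)).symm x‖ := by
    calc ‖Matrix.toEuclideanCLM (𝕜 := ℂ) B ((WithLp.equiv 2 (Fin n → ℂ)).symm x)‖
        ≤ ‖Matrix.toEuclideanCLM (𝕜 := ℂ) B‖ * ‖(WithLp.equiv 2 (Fin n → ℂ)).symm x‖ :=
          ContinuousLinearMap.le_opNorm _ _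
      _ ≤ 1 * ‖(WithLp.equiv 2 (Fin n → ℂ)).symm x‖ :=
          mul_le_mul_of_nonneg_right hB (norm_nonneg _)
      _ = _ := one_mul _
  exact pow_le_pow_left₀ (norm_nonneg _) hle 2


open scoped MatrixOrder in
lemma exists_unitary_dilation {n : ℕ} (B : Matrix (Fin n) (Fin n) ℂ)
    (h : ((1 : Matrix (Fin n) (Fin n) ℂ) - Bᴴ * B).PosSemidef) :
    ∃ U : Matrix (Fin n ⊕ Fin n) (Fin n ⊕ Fin n) ℂ,
      Uᴴ * U = 1 ∧ ∀ i j, U (Sum.inl i) (Sum.inl j) = B i j := by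
  set S := CFC.sqrt (1 - Bᴴ * B) with hS_def
  have hSS : S * S = 1 - Bᴴ * B := CFC.sqrt_mul_sqrt_self _ h.nonneg
  have hSH : Sᴴ = S := (CFC.sqrt_nonneg _).posSemidef.1
  set col : Fin n → ((Fin n ⊕ Fin n) → ℂ) :=
    fun j => Sum.elim (fun r => B r j) (fun r => S r j) with hcol
  set v : (Fin n ⊕ Fin n) → EuclideanSpace ℂ (Fin n ⊕ Fin n) :=
    Sum.elim (fun j => (WithLp.equiv 2 ((Fin n ⊕ Fin n) → ℂ)).symm (col j)) (fun _ => 0) with hv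
  have hinner : ∀ i j : Fin n, ⟪v (Sum.inl i), v (Sum.inl j)⟫_ℂ = if i = j then 1 else 0 := by
    intro i j
    rw [hv]
    simp only [Sum.elim_inl]
    rw [WithLp.equiv_symm_apply, EuclideanSpace.inner_toLp_toLp, dotProduct_comm, dotProduct,
      Fintype.sum_sum_type]
    have e1 : ∀ r, star (col i) (Sum.inl r) * col j (Sum.inl r) = Bᴴ i r * B r j := fun r => by
      simp [hcol, Matrix.conjTranspose_apply, Pi.star_apply]
    have e2 : ∀ r, star (col i) (Sum.inr r) * col j (Sum.inr r) = Sᴴ i r * S r j := fun r => by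
      simp [hcol, Matrix.conjTranspose_apply, Pi.star_apply]
    rw [Finset.sum_congr rfl (fun r _ => e1 r), Finset.sum_congr rfl (fun r _ => e2 r),
      ← Matrix.mul_apply, ← Matrix.mul_apply, ← Matrix.add_apply, hSH, hSS, add_sub_cancel,
      Matrix.one_apply]
  have hcard : Module.finrank ℂ (EuclideanSpace ℂ (Fin n ⊕ Fin n))
      = Fintype.card (Fin n ⊕ Fin n) := finrank_euclideanSpace
  have horth : Orthonormal ℂ ((Set.range Sum.inl).restrict v) := by
    rw [orthonormal_iff_ite]
    rintro ⟨p, i, rfl⟩ ⟨q, j, rfl⟩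
    change ⟪v (Sum.inl i), v (Sum.inl j)⟫_ℂ = _
    rw [hinner i j]
    congr 1
    simp [Subtype.ext_iff, Sum.inl.injEq]
  obtain ⟨b, hb⟩ := horth.exists_orthonormalBasis_extension_of_card_eq hcard
  refine ⟨Matrix.of fun i j => (WithLp.equiv 2 ((Fin n ⊕ Fin n) → ℂ)) (b j) i, ?_, ?_⟩
  · ext i j
    rw [Matrix.mul_apply, Matrix.one_apply]
    have := orthonormal_iff_ite.mp b.orthonormal i j
    rw [EuclideanSpace.inner_eq_star_dotProduct, dotProduct] at this
    rw [← this]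
    exact Finset.sum_congr rfl fun k _ => by
      simp [Matrix.conjTranspose_apply, Matrix.of_apply, mul_comm]
  · intro i j
    have hbj : b (Sum.inl j) = v (Sum.inl j) := hb _ ⟨j, rfl⟩
    rw [Matrix.of_apply, hbj, hv]
    simp only [Sum.elim_inl]
    rw [Equiv.apply_symm_apply]
    simp [hcol]


theorem arveson_J2 {m : ℕ} (X : Matrix (Fin m) (Fin m) ℂ)
    (hX : ∀ lam : ℂ, ‖lam‖ = 1 →
      ((1 : Matrix (Fin m) (Fin m) ℂ) + lam • X + (starRingEnd ℂ lam) • Xᴴ).PosSemidef) :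
    ∀ n : ℕ, ∀ B : Matrix (Fin n) (Fin n) ℂ, opNorm B ≤ 1 →
      ((1 : Matrix (Fin n) (Fin n) ℂ) ⊗ₖ (1 : Matrix (Fin m) (Fin m) ℂ)
          + B ⊗ₖ X + Bᴴ ⊗ₖ Xᴴ).PosSemidef := by
  intro n B hB
  obtain ⟨U, hU, hUB⟩ := exists_unitary_dilation B (contraction_one_sub_psd B hB)
  have hUU : U * Uᴴ = 1 := mul_eq_one_comm.mp hU
  have hW : (Uᴴ ⊗ₖ (1 : Matrix (Fin m) (Fin m) ℂ))ᴴ * (Uᴴ ⊗ₖ 1) = 1 := by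
    rw [kron_conjTranspose, Matrix.conjTranspose_conjTranspose, Matrix.conjTranspose_one,
      ← Matrix.mul_kronecker_mul, hUU, one_mul, Matrix.one_kronecker_one]
  have hC : (Uᴴ ⊗ₖ (1 : Matrix (Fin m) (Fin m) ℂ)) * ((1 : Matrix (Fin n ⊕ Fin n) (Fin n ⊕ Fin n) ℂ) ⊗ₖ X)
      = ((1 : Matrix (Fin n ⊕ Fin n) (Fin n ⊕ Fin n) ℂ) ⊗ₖ X) * (Uᴴ ⊗ₖ 1) := by
    rw [← Matrix.mul_kronecker_mul, ← Matrix.mul_kronecker_mul, one_mul, mul_one, one_mul, mul_one]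
  have hkXH : ((1 : Matrix (Fin n ⊕ Fin n) (Fin n ⊕ Fin n) ℂ) ⊗ₖ X)ᴴ
      = (1 : Matrix (Fin n ⊕ Fin n) (Fin n ⊕ Fin n) ℂ) ⊗ₖ Xᴴ := by
    rw [kron_conjTranspose, Matrix.conjTranspose_one]
  have hC' : (Uᴴ ⊗ₖ (1 : Matrix (Fin m) (Fin m) ℂ)) * ((1 : Matrix (Fin n ⊕ Fin n) (Fin n ⊕ Fin n) ℂ) ⊗ₖ X)ᴴ
      = ((1 : Matrix (Fin n ⊕ Fin n) (Fin n ⊕ Fin n) ℂ) ⊗ₖ X)ᴴ * (Uᴴ ⊗ₖ 1) := by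
    rw [hkXH, ← Matrix.mul_kronecker_mul, ← Matrix.mul_kronecker_mul, one_mul, mul_one, one_mul,
      mul_one]
  have hY : ∀ lam : ℂ, ‖lam‖ = 1 →
      ((1 : Matrix ((Fin n ⊕ Fin n) × Fin m) ((Fin n ⊕ Fin n) × Fin m) ℂ)
        + lam • ((1 : Matrix (Fin n ⊕ Fin n) (Fin n ⊕ Fin n) ℂ) ⊗ₖ X)
        + (starRingEnd ℂ) lam • ((1 : Matrix (Fin n ⊕ Fin n) (Fin n ⊕ Fin n) ℂ) ⊗ₖ X)ᴴ).PosSemidef := by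
    intro lam hl
    have h0 := one_kron_psd (κ := Fin n ⊕ Fin n) (hX lam hl)
    have heq : (1 : Matrix (Fin n ⊕ Fin n) (Fin n ⊕ Fin n) ℂ) ⊗ₖ
        ((1 : Matrix (Fin m) (Fin m) ℂ) + lam • X + (starRingEnd ℂ lam) • Xᴴ)
        = (1 : Matrix ((Fin n ⊕ Fin n) × Fin m) ((Fin n ⊕ Fin n) × Fin m) ℂ)
        + lam • ((1 : Matrix (Fin n ⊕ Fin n) (Fin n ⊕ Fin n) ℂ) ⊗ₖ X)
        + (starRingEnd ℂ) lam • ((1 : Matrix (Fin n ⊕ Fin n) (Fin n ⊕ Fin n) ℂ) ⊗ₖ X)ᴴ := by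
      rw [Matrix.kronecker_add, Matrix.kronecker_add, Matrix.kronecker_smul,
        Matrix.kronecker_smul, Matrix.one_kronecker_one, hkXH]
    rw [← heq]
    exact h0
  have big := unitary_psd (Uᴴ ⊗ₖ (1 : Matrix (Fin m) (Fin m) ℂ))
    ((1 : Matrix (Fin n ⊕ Fin n) (Fin n ⊕ Fin n) ℂ) ⊗ₖ X) hW hC hC' hY
  rw [kron_conjTranspose, Matrix.conjTranspose_conjTranspose, Matrix.conjTranspose_one, hkXH,
    ← Matrix.mul_kronecker_mul, ← Matrix.mul_kronecker_mul, mul_one, one_mul, mul_one, one_mul]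
    at big
  have hsub := big.submatrix (fun p : Fin n × Fin m => ((Sum.inl p.1 : Fin n ⊕ Fin n), p.2))
  have hfinal : ((1 : Matrix ((Fin n ⊕ Fin n) × Fin m) ((Fin n ⊕ Fin n) × Fin m) ℂ)
        + U ⊗ₖ X + Uᴴ ⊗ₖ Xᴴ).submatrix
        (fun p : Fin n × Fin m => ((Sum.inl p.1 : Fin n ⊕ Fin n), p.2))
        (fun p : Fin n × Fin m => ((Sum.inl p.1 : Fin n ⊕ Fin n), p.2))
      = (1 : Matrix (Fin n) (Fin n) ℂ) ⊗ₖ (1 : Matrix (Fin m) (Fin m) ℂ)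
          + B ⊗ₖ X + Bᴴ ⊗ₖ Xᴴ := by
    rw [Matrix.one_kronecker_one]
    ext ⟨i1, i2⟩ ⟨j1, j2⟩
    simp only [Matrix.submatrix_apply, Matrix.add_apply, Matrix.kroneckerMap_apply,
      Matrix.one_apply, Matrix.conjTranspose_apply, hUB, Prod.mk.injEq, Sum.inl.injEq,
      Prod.ext_iff]
  rw [← hfinal]
  exact hsub
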